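/- Let N ≥ 1 and let g : ℝ^N → [0,∞) be integrable with ρ₀ = ∫ g(v) dv and ρ₁ = ∫ g(v)|v| dv finite. Then for every r > 0 and every K > 0 there exists a > 0 such that the function h(v) = K·exp(−a|v|^{3/2}) satisfies Δh(v) − h(v)·∫_{ℝ^N} g(v_*)|v − v_*| dv_* ≥ 0 for all v with |v| > r. -/

import Mathlib

open MeasureTheory

noncomputable section

/-- The Laplacian in the velocity variable. -/
def laplacian {N : ℕ} (f : EuclideanSpace ℝ (Fin N) → ℝ)
    (v : EuclideanSpace ℝ (Fin N)) : ℝ :=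
  ∑ i : Fin N, iteratedFDeriv ℝ 2 f v ![EuclideanSpace.single i 1, EuclideanSpace.single i 1]

namespace StretchedAux

def phi (a K t : ℝ) : ℝ := K * Real.exp (-a * t ^ ((3:ℝ)/4))
def phiD (a K t : ℝ) : ℝ := phi a K t * (-a * ((3:ℝ)/4 * t ^ ((3:ℝ)/4 - 1)))
def phiDD (a K t : ℝ) : ℝ :=
  phiD a K t * (-a * ((3:ℝ)/4 * t ^ ((3:ℝ)/4 - 1)))
    + phi a K t * (-a * ((3:ℝ)/4 * (((3:ℝ)/4 - 1) * t ^ ((3:ℝ)/4 - 1 - 1))))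

lemma hasDerivAt_phi {a K t : ℝ} (ht : 0 < t) : HasDerivAt (phi a K) (phiD a K t) t := by
  have h1 : HasDerivAt (fun t : ℝ => t ^ ((3:ℝ)/4)) ((3:ℝ)/4 * t ^ ((3:ℝ)/4 - 1)) t :=
    Real.hasDerivAt_rpow_const (Or.inl ht.ne')
  have h2 := ((h1.const_mul (-a)).exp).const_mul K
  have e : phiD a K t = K * (Real.exp (-a * t ^ ((3:ℝ)/4)) * (-a * ((3:ℝ)/4 * t ^ ((3:ℝ)/4 - 1)))) := by
    unfold phiD phi; ring
  rw [e]; exact h2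

lemma hasDerivAt_phiD {a K t : ℝ} (ht : 0 < t) : HasDerivAt (phiD a K) (phiDD a K t) t := by
  have h1 : HasDerivAt (fun t : ℝ => t ^ ((3:ℝ)/4 - 1)) (((3:ℝ)/4 - 1) * t ^ ((3:ℝ)/4 - 1 - 1)) t :=
    Real.hasDerivAt_rpow_const (Or.inl ht.ne')
  exact (hasDerivAt_phi (a := a) (K := K) ht).mul ((h1.const_mul ((3:ℝ)/4)).const_mul (-a))

lemma hasFDerivAt_radial {N : ℕ} {F : ℝ → ℝ} {F' : ℝ} (w : EuclideanSpace ℝ (Fin N))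
    (hF : HasDerivAt F F' (‖w‖^2)) :
    HasFDerivAt (fun w : EuclideanSpace ℝ (Fin N) => F (‖w‖^2)) (F' • (2 • innerSL ℝ w)) w :=
  hF.comp_hasFDerivAt w (hasStrictFDerivAt_norm_sq w).hasFDerivAt

lemma laplacian_formula {N : ℕ} (a K : ℝ) (v : EuclideanSpace ℝ (Fin N)) (hv : v ≠ 0) :
    laplacian (fun w : EuclideanSpace ℝ (Fin N) =>
        K * Real.exp (-a * ‖w‖ ^ ((3 : ℝ) / 2))) v
      = (N:ℝ) * (2 * phiD a K (‖v‖^2)) + 4 * phiDD a K (‖v‖^2) * ‖v‖^2 := by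
  unfold laplacian
  have hv0 : (0:ℝ) < ‖v‖ := norm_pos_iff.mpr hv
  have hs : (0:ℝ) < ‖v‖^2 := by positivity
  have hfun : (fun w : EuclideanSpace ℝ (Fin N) => K * Real.exp (-a * ‖w‖ ^ ((3 : ℝ) / 2)))
      = fun w => phi a K (‖w‖^2) := by
    funext w
    unfold phi
    have : ((‖w‖^2 : ℝ)) ^ ((3:ℝ)/4) = ‖w‖ ^ ((3:ℝ)/2) := by
      rw [← Real.rpow_natCast ‖w‖ 2, ← Real.rpow_mul (norm_nonneg w)]
      norm_num
    rw [this]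
  rw [hfun]
  set f : EuclideanSpace ℝ (Fin N) → ℝ := fun w => phi a K (‖w‖^2) with hf
  have hmem : {w : EuclideanSpace ℝ (Fin N) | w ≠ 0} ∈ nhds v := isOpen_ne.mem_nhds hv
  have hfd : ∀ w : EuclideanSpace ℝ (Fin N), w ≠ 0 →
      HasFDerivAt f ((phiD a K (‖w‖^2)) • (2 • innerSL ℝ w)) w := by
    intro w hw
    have hw0 : (0:ℝ) < ‖w‖ := norm_pos_iff.mpr hw
    exact hasFDerivAt_radial w (hasDerivAt_phi (by positivity))
  have heq : (fun w => fderiv ℝ f w) =ᶠ[nhds v]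
      fun w => (phiD a K (‖w‖^2)) • (2 • innerSL ℝ w) :=
    Filter.eventually_of_mem hmem fun w hw => (hfd w hw).fderiv
  have hcd : ContDiffAt ℝ 2 f v := by
    have h1 : ContDiffAt ℝ 2 (phi a K) (‖v‖^2) := by
      have h0 : ContDiffAt ℝ 2 (fun t : ℝ => t ^ ((3:ℝ)/4)) (‖v‖^2) :=
        Real.contDiffAt_rpow_const_of_ne hs.ne'
      exact contDiffAt_const.mul ((contDiffAt_const.mul h0).exp)
    exact h1.comp (f := fun w : EuclideanSpace ℝ (Fin N) => ‖w‖^2) v ((contDiff_norm_sq ℝ).contDiffAt)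
  have hD : DifferentiableAt ℝ (fderiv ℝ f) v :=
    (hcd.fderiv_right (m := 1) (by norm_num)).differentiableAt one_ne_zero
  have key : ∀ i : Fin N, iteratedFDeriv ℝ 2 f v
      ![EuclideanSpace.single i 1, EuclideanSpace.single i 1]
      = 2 * phiD a K (‖v‖^2) + 4 * phiDD a K (‖v‖^2) * (v i)^2 := by
    intro i
    set u : EuclideanSpace ℝ (Fin N) := EuclideanSpace.single i 1 with hu
    rw [iteratedFDeriv_two_apply]
    simp only [Matrix.cons_val_zero, Matrix.cons_val_one, Matrix.head_cons]
    have hswap : fderiv ℝ (fun w => fderiv ℝ f w u) v = (fderiv ℝ (fderiv ℝ f) v).flip u := by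
      have h := fderiv_clm_apply hD (differentiableAt_const u)
      simpa using h
    have heq2 : (fun w : EuclideanSpace ℝ (Fin N) => fderiv ℝ f w u) =ᶠ[nhds v]
        fun w => phiD a K (‖w‖^2) * (2 * w i) := by
      filter_upwards [heq] with w hw
      rw [hw]
      have : ((phiD a K (‖w‖^2)) • ((2:ℕ) • innerSL ℝ w)) u
          = phiD a K (‖w‖^2) * (2 * (inner ℝ w u : ℝ)) := by
        simp only [ContinuousLinearMap.smul_apply, innerSL_apply_apply, smul_eq_mul, nsmul_eq_mul,
          Nat.cast_ofNat]
      rw [this]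
      have hinner : (inner ℝ w u : ℝ) = w i := by
        rw [hu, EuclideanSpace.inner_single_right]; simp
      rw [hinner]
    have h1 : HasFDerivAt (fun w : EuclideanSpace ℝ (Fin N) => phiD a K (‖w‖^2))
        ((phiDD a K (‖v‖^2)) • (2 • innerSL ℝ v)) v :=
      hasFDerivAt_radial v (hasDerivAt_phiD hs)
    have h2 : HasFDerivAt (fun w : EuclideanSpace ℝ (Fin N) => 2 * w i)
        ((2:ℝ) • (EuclideanSpace.proj i : EuclideanSpace ℝ (Fin N) →L[ℝ] ℝ)) v :=
      (EuclideanSpace.proj i : EuclideanSpace ℝ (Fin N) →L[ℝ] ℝ).hasFDerivAt.const_mul 2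
    have h3 : fderiv ℝ (fun w : EuclideanSpace ℝ (Fin N) => phiD a K (‖w‖^2) * (2 * w i)) v = _ :=
      (h1.mul h2).fderiv
    have hval : fderiv ℝ (fun w : EuclideanSpace ℝ (Fin N) => fderiv ℝ f w u) v u
        = 2 * phiD a K (‖v‖^2) + 4 * phiDD a K (‖v‖^2) * (v i)^2 := by
      rw [heq2.fderiv_eq, h3]
      have hui : u i = 1 := by simp [hu]
      have hproj : (EuclideanSpace.proj i : EuclideanSpace ℝ (Fin N) →L[ℝ] ℝ) u = 1 := by
        simp [hu]
      have hvu : (inner ℝ v u : ℝ) = v i := by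
        rw [hu, EuclideanSpace.inner_single_right]; simp
      simp only [ContinuousLinearMap.add_apply, ContinuousLinearMap.smul_apply,
        innerSL_apply_apply, smul_eq_mul, nsmul_eq_mul, Nat.cast_ofNat, hproj, hui, hvu]
      ring
    rw [← hval, hswap]
    simp
  rw [Finset.sum_congr rfl (fun i _ => key i)]
  have hnorm : ∑ i, (v i)^2 = ‖v‖^2 := by
    rw [EuclideanSpace.norm_eq, Real.sq_sqrt (by positivity)]
    simp [sq_abs]
  rw [Finset.sum_add_distrib]
  simp [← Finset.mul_sum, hnorm]

lemma laplacian_value {N : ℕ} (a K : ℝ) (v : EuclideanSpace ℝ (Fin N)) (hv0 : 0 < ‖v‖) :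
    laplacian (fun w : EuclideanSpace ℝ (Fin N) =>
        K * Real.exp (-a * ‖w‖ ^ ((3 : ℝ) / 2))) v
      = K * Real.exp (-a * ‖v‖ ^ ((3 : ℝ) / 2)) *
          ((9/4)*a^2*‖v‖ + ((3:ℝ)*a/4)/Real.sqrt ‖v‖ - (3*(N:ℝ)*a/2)/Real.sqrt ‖v‖) := by
  have hvne : v ≠ 0 := by
    intro h; rw [h] at hv0; simp at hv0
  rw [laplacian_formula a K v hvne]
  set n := ‖v‖ with hn
  set m := Real.sqrt n with hmdef
  have hm0 : 0 < m := Real.sqrt_pos.mpr hv0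
  have hmm : m * m = n := Real.mul_self_sqrt hv0.le
  have E1 : ((n^2 : ℝ)) ^ ((3:ℝ)/4) = n ^ ((3:ℝ)/2) := by
    rw [← Real.rpow_natCast n 2, ← Real.rpow_mul hv0.le]
    norm_num
  have E2 : ((n^2 : ℝ)) ^ ((3:ℝ)/4 - 1) = m / n := by
    rw [← Real.rpow_natCast n 2, ← Real.rpow_mul hv0.le]
    rw [show ((2:ℕ):ℝ) * ((3:ℝ)/4 - 1) = 1/2 - 1 by norm_num]
    rw [Real.rpow_sub hv0, Real.rpow_one, ← Real.sqrt_eq_rpow]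
  have E3 : ((n^2 : ℝ)) ^ ((3:ℝ)/4 - 1 - 1) = m / (n*n*n) := by
    rw [← Real.rpow_natCast n 2, ← Real.rpow_mul hv0.le]
    rw [show ((2:ℕ):ℝ) * ((3:ℝ)/4 - 1 - 1) = 1/2 - 3 by norm_num]
    rw [Real.rpow_sub hv0, ← Real.sqrt_eq_rpow, hmdef,
      show ((3:ℝ)) = ((3:ℕ):ℝ) by norm_num, Real.rpow_natCast,
      show n^(3:ℕ) = n*n*n by ring]
  unfold phiDD phiD phi
  rw [E1, E2, E3]
  rw [← hmm]
  have hmne : m ≠ 0 := hm0.ne'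
  field_simp
  ring
end StretchedAux

open StretchedAux in
/-- The stretched exponential `h(v) = K exp(−a|v|^{3/2})` is a subsolution of
`Δh − Q⁻(g,h) = 0` outside the ball of radius `r`: for every `r, K > 0` there
is `a > 0` such that `Δh(v) − h(v)∫g(v_*)|v−v_*| dv_* ≥ 0` for `|v| > r`. -/
theorem stretched_exponential_subsolution
    (N : ℕ) (hN : 1 ≤ N) (g : EuclideanSpace ℝ (Fin N) → ℝ)
    (hg0 : ∀ v, 0 ≤ g v)
    (hgint : Integrable g volume)
    (hg1 : Integrable (fun v => g v * ‖v‖) volume)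
    (r K : ℝ) (hr : 0 < r) (hK : 0 < K) :
    ∃ a : ℝ, 0 < a ∧
      ∀ v : EuclideanSpace ℝ (Fin N), r < ‖v‖ →
        0 ≤ laplacian (fun w => K * Real.exp (-a * ‖w‖ ^ ((3 : ℝ) / 2))) v
            - (K * Real.exp (-a * ‖v‖ ^ ((3 : ℝ) / 2))) *
                ∫ vs : EuclideanSpace ℝ (Fin N), g vs * ‖v - vs‖ := by
  obtain ⟨ρ₀, hρ₀⟩ : ∃ x : ℝ, x = ∫ vs, g vs := ⟨_, rfl⟩
  obtain ⟨ρ₁, hρ₁⟩ : ∃ x : ℝ, x = ∫ vs, g vs * ‖vs‖ := ⟨_, rfl⟩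
  have hρ₀0 : 0 ≤ ρ₀ := hρ₀ ▸ integral_nonneg hg0
  have hρ₁0 : 0 ≤ ρ₁ := hρ₁ ▸ integral_nonneg fun vs => mul_nonneg (hg0 vs) (norm_nonneg vs)
  obtain ⟨mr, hmrdef⟩ : ∃ x : ℝ, x = Real.sqrt r := ⟨_, rfl⟩
  have hmr0 : 0 < mr := hmrdef ▸ Real.sqrt_pos.mpr hr
  have hmrr : mr * mr = r := hmrdef ▸ Real.mul_self_sqrt hr.le
  obtain ⟨C, hC⟩ : ∃ x : ℝ, x = ρ₀ + ρ₁ / r + (3 * (N:ℝ) / 2) / (r * mr) := ⟨_, rfl⟩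
  have hC0 : 0 ≤ C := by rw [hC]; positivity
  refine ⟨1 + (4/9) * C, by positivity, ?_⟩
  obtain ⟨a, ha'⟩ : ∃ x : ℝ, x = 1 + (4/9) * C := ⟨_, rfl⟩
  rw [← ha']
  have ha1 : (1:ℝ) ≤ a := by linarith
  have ha0 : (0:ℝ) < a := by linarith
  intro v hv
  have hv0 : (0:ℝ) < ‖v‖ := lt_trans hr hv
  -- rewrite the Laplacian
  rw [laplacian_value a K v hv0]
  obtain ⟨n, hn⟩ : ∃ x : ℝ, x = ‖v‖ := ⟨_, rfl⟩
  rw [← hn]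
  obtain ⟨m, hmdef⟩ : ∃ x : ℝ, x = Real.sqrt n := ⟨_, rfl⟩
  rw [← hmdef]
  have hn0 : 0 < n := hn ▸ hv0
  have hnr : r < n := hn ▸ hv
  have hm0 : 0 < m := by rw [hmdef]; exact Real.sqrt_pos.mpr hn0
  have hmm : m * m = n := by rw [hmdef]; exact Real.mul_self_sqrt hn0.le
  have hmrm : mr ≤ m := by rw [hmdef, hmrdef]; exact Real.sqrt_le_sqrt hnr.le
  -- integral bound
  have hbound : Integrable (fun vs => g vs * ‖v‖ + g vs * ‖vs‖) volume :=
    (hgint.mul_const ‖v‖).add hg1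
  have hle : ∀ vs, g vs * ‖v - vs‖ ≤ g vs * ‖v‖ + g vs * ‖vs‖ := by
    intro vs
    calc g vs * ‖v - vs‖ ≤ g vs * (‖v‖ + ‖vs‖) :=
          mul_le_mul_of_nonneg_left (norm_sub_le v vs) (hg0 vs)
      _ = g vs * ‖v‖ + g vs * ‖vs‖ := by ring
  have hint : Integrable (fun vs => g vs * ‖v - vs‖) volume := by
    refine hbound.mono' (hgint.aestronglyMeasurable.mul ?_) (ae_of_all _ fun vs => ?_)
    · exact ((continuous_const.sub continuous_id).norm).aestronglyMeasurable
    · rw [Real.norm_eq_abs, abs_of_nonneg (mul_nonneg (hg0 vs) (norm_nonneg _))]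
      exact hle vs
  have hI : (∫ vs, g vs * ‖v - vs‖) ≤ ρ₀ * n + ρ₁ := by
    calc (∫ vs, g vs * ‖v - vs‖) ≤ ∫ vs, (g vs * ‖v‖ + g vs * ‖vs‖) :=
          integral_mono hint hbound hle
      _ = ρ₀ * n + ρ₁ := by
          rw [integral_add (hgint.mul_const _) hg1, integral_mul_const, ← hρ₀, ← hρ₁, ← hn]
  -- main scalar inequality
  have hmain : ρ₀ * n + ρ₁ + (3*(N:ℝ)*a/2)/m ≤ (9/4)*a^2*n + ((3:ℝ)*a/4)/m := by
    have hN1 : (1:ℝ) ≤ (N:ℝ) := by exact_mod_cast hN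
    have han : r ≤ a * n := by
      nlinarith [mul_le_mul_of_nonneg_right ha1 hn0.le]
    have t1 : ρ₁ ≤ ρ₁ / r * a * n := by
      have h2 : ρ₁ * r ≤ ρ₁ * (a*n) := mul_le_mul_of_nonneg_left han hρ₁0
      have h3 : ρ₁ / r * a * n = ρ₁ * (a*n) / r := by ring
      rw [h3, le_div_iff₀ hr]
      linarith
    have t2 : (3*(N:ℝ)*a/2)/m ≤ (3*(N:ℝ)/2) / (r*mr) * a * n := by
      have hq : (1:ℝ)/m ≤ n/(r*mr) := by
        rw [div_le_div_iff₀ hm0 (by positivity)]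
        nlinarith [mul_le_mul hnr.le hmrm hmr0.le hn0.le]
      calc (3*(N:ℝ)*a/2)/m = (3*(N:ℝ)/2*a) * (1/m) := by ring
        _ ≤ (3*(N:ℝ)/2*a) * (n/(r*mr)) :=
            mul_le_mul_of_nonneg_left hq (by positivity)
        _ = (3*(N:ℝ)/2) / (r*mr) * a * n := by ring
    have t3 : ρ₀ * n ≤ ρ₀ * a * n := by
      have h1 := mul_le_mul_of_nonneg_left ha1 hρ₀0
      have h2 := mul_le_mul_of_nonneg_right h1 hn0.le
      linarith [h2]
    have hCa : C ≤ (9/4) * a := by linarith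
    have t5 : C * a * n ≤ (9/4)*a^2*n := by
      nlinarith [mul_le_mul_of_nonneg_right hCa (mul_nonneg ha0.le hn0.le)]
    have t6 : (0:ℝ) ≤ ((3:ℝ)*a/4)/m := by positivity
    have hsum : ρ₀ * a * n + ρ₁ / r * a * n + (3*(N:ℝ)/2) / (r*mr) * a * n = C * a * n := by
      rw [hC]; ring
    linarith
  have hfin : (∫ vs, g vs * ‖v - vs‖) ≤ (9/4)*a^2*n + ((3:ℝ)*a/4)/m - (3*(N:ℝ)*a/2)/m := by
    linarith
  have hP : (0:ℝ) < K * Real.exp (-a * n ^ ((3:ℝ)/2)) := by positivity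
  have h2 := mul_le_mul_of_nonneg_left hfin hP.le
  linarith [h2]
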